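/- arXiv:2511.22835 — 4 statements merged into one kernel-verified Lean document; each statement's English description precedes it below -/
import Mathlib

section
/- Let c ∈ (0,1] and let φ_c solve (1−y²)φ'' − yφ' + (9/4)φ − |φ|^{4/3}φ = 0 with φ_c(0)=0, φ_c'(0)=c, and let φ_* solve the linear equation (1−y²)φ'' − yφ' + (9/4)φ = 0 with φ_*(0)=0, φ_*'(0)=1. Suppose φ_c > 0 on (0, y₀) for some y₀ ∈ (0,1]. Then φ_c(y) > c·φ_*(y) > 0 for all y ∈ (0, y₀). -/
open Set

open Set Real

noncomputable def qf (y : ℝ) : ℝ := Real.sqrt (1 - y^2)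
noncomputable def sf (y : ℝ) : ℝ := Real.sin ((3/2) * Real.arcsin y)
noncomputable def kf (y : ℝ) : ℝ := Real.cos ((3/2) * Real.arcsin y)

lemma one_sub_sq_pos {y : ℝ} (hy : y ∈ Ioo (-1:ℝ) 1) : 0 < 1 - y^2 := by
  nlinarith [hy.1, hy.2]

lemma qf_pos {y : ℝ} (hy : y ∈ Ioo (-1:ℝ) 1) : 0 < qf y :=
  Real.sqrt_pos.2 (one_sub_sq_pos hy)

lemma qf_sq {y : ℝ} (hy : y ∈ Ioo (-1:ℝ) 1) : qf y ^ 2 = 1 - y^2 :=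
  Real.sq_sqrt (one_sub_sq_pos hy).le

lemma hasDerivAt_qf {y : ℝ} (hy : y ∈ Ioo (-1:ℝ) 1) : HasDerivAt qf (-y / qf y) y := by
  have h1 : HasDerivAt (fun y : ℝ => 1 - y^2) (-(2*y)) y := by
    simpa using (hasDerivAt_pow 2 y).const_sub 1
  have := h1.sqrt (one_sub_sq_pos hy).ne'
  refine this.congr_deriv (Eq.symm ?_)
  rw [div_eq_div_iff (qf_pos hy).ne' (by have := qf_pos hy; unfold qf at this; positivity)]
  unfold qf; ring

lemma hasDerivAt_inner {y : ℝ} (hy : y ∈ Ioo (-1:ℝ) 1) :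
    HasDerivAt (fun y => (3/2) * Real.arcsin y) ((3/2) / qf y) y := by
  have := (Real.hasDerivAt_arcsin (ne_of_gt hy.1) (ne_of_lt hy.2)).const_mul (3/2 : ℝ)
  refine this.congr_deriv (Eq.symm ?_)
  unfold qf; ring

lemma hasDerivAt_sf {y : ℝ} (hy : y ∈ Ioo (-1:ℝ) 1) :
    HasDerivAt sf ((3/2) * kf y / qf y) y := by
  have := (Real.hasDerivAt_sin ((3/2) * Real.arcsin y)).comp y (hasDerivAt_inner hy)
  refine this.congr_deriv (Eq.symm ?_)
  unfold kf; ring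

lemma hasDerivAt_kf {y : ℝ} (hy : y ∈ Ioo (-1:ℝ) 1) :
    HasDerivAt kf (-((3/2) * sf y / qf y)) y := by
  have := (Real.hasDerivAt_cos ((3/2) * Real.arcsin y)).comp y (hasDerivAt_inner hy)
  refine this.congr_deriv (Eq.symm ?_)
  unfold sf; ring

lemma sf_pos {y : ℝ} (h0 : 0 < y) (h1 : y < 1) : 0 < sf y := by
  have ha : 0 < Real.arcsin y := Real.arcsin_pos.2 h0
  have hb : Real.arcsin y ≤ π/2 := Real.arcsin_le_pi_div_two y
  have hpi := Real.pi_pos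
  exact Real.sin_pos_of_pos_of_lt_pi (by linarith) (by linarith)

lemma qf_zero : qf 0 = 1 := by simp [qf]
lemma sf_zero : sf 0 = 0 := by simp [sf]
lemma kf_zero : kf 0 = 1 := by simp [kf]

lemma eq_of_deriv_zero (F : ℝ → ℝ) (hF : ∀ x ∈ Ioo (-1:ℝ) 1, HasDerivAt F 0 x)
    {y : ℝ} (h0 : 0 ≤ y) (h1 : y < 1) : F y = F 0 := by
  rcases eq_or_lt_of_le h0 with rfl | h0
  · rfl
  have hsub : Icc (0:ℝ) y ⊆ Ioo (-1) 1 := fun x hx => ⟨by linarith [hx.1], lt_of_le_of_lt hx.2 h1⟩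
  have hcont : ContinuousOn F (Icc 0 y) := fun x hx =>
    (hF x (hsub hx)).continuousAt.continuousWithinAt
  obtain ⟨ξ, hξ, hval⟩ := exists_hasDerivAt_eq_slope F (fun _ => 0) h0 hcont
    (fun x hx => hF x (hsub ⟨hx.1.le, hx.2.le⟩))
  have hval' : (0:ℝ) = (F y - F 0)/(y - 0) := hval
  field_simp at hval'
  linarith

/-- Wronskian comparison for the self-similar ODE: if `φ_c` solves the
nonlinear equation with `φ_c(0)=0`, `φ_c'(0)=c ∈ (0,1]`, `φ_*` solves the linear
equation with `φ_*(0)=0`, `φ_*'(0)=1`, and `φ_c > 0` on `(0,y₀)` for some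
`y₀ ∈ (0,1]`, then `φ_c(y) > c φ_*(y) > 0` on `(0,y₀)`. -/
theorem stmt12 (c : ℝ) (hc : 0 < c) (hc1 : c ≤ 1)
    (φc φs : ℝ → ℝ)
    (hφc : ContDiffOn ℝ 2 φc (Set.Ioo (-1) 1))
    (hφs : ContDiffOn ℝ 2 φs (Set.Ioo (-1) 1))
    (hodec : ∀ y ∈ Set.Ioo (-1:ℝ) 1,
      (1 - y^2) * deriv (deriv φc) y - y * deriv φc y + (9/4) * φc y
        - |φc y| ^ ((4:ℝ)/3) * φc y = 0)
    (hodes : ∀ y ∈ Set.Ioo (-1:ℝ) 1,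
      (1 - y^2) * deriv (deriv φs) y - y * deriv φs y + (9/4) * φs y = 0)
    (h0c : φc 0 = 0) (h0c' : deriv φc 0 = c)
    (h0s : φs 0 = 0) (h0s' : deriv φs 0 = 1)
    (y₀ : ℝ) (hy₀ : 0 < y₀) (hy₀1 : y₀ ≤ 1)
    (hpos : ∀ y ∈ Set.Ioo 0 y₀, 0 < φc y) :
    ∀ y ∈ Set.Ioo 0 y₀, c * φs y < φc y ∧ 0 < c * φs y := by
  have hopen : IsOpen (Set.Ioo (-1:ℝ) 1) := isOpen_Ioo
  have h0mem : (0:ℝ) ∈ Set.Ioo (-1:ℝ) 1 := by norm_num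
  have hsub : Set.Ioo 0 y₀ ⊆ Set.Ioo (-1:ℝ) 1 :=
    fun x hx => ⟨by linarith [hx.1], lt_of_lt_of_le hx.2 hy₀1⟩
  -- derivatives
  have hdc : ∀ y ∈ Set.Ioo (-1:ℝ) 1, HasDerivAt φc (deriv φc y) y := fun y hy =>
    ((hφc.differentiableOn (by norm_num)).differentiableAt (hopen.mem_nhds hy)).hasDerivAt
  have hds : ∀ y ∈ Set.Ioo (-1:ℝ) 1, HasDerivAt φs (deriv φs y) y := fun y hy =>
    ((hφs.differentiableOn (by norm_num)).differentiableAt (hopen.mem_nhds hy)).hasDerivAt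
  have hφc1 : ContDiffOn ℝ 1 (deriv φc) (Set.Ioo (-1:ℝ) 1) :=
    hφc.deriv_of_isOpen hopen (by norm_num)
  have hφs1 : ContDiffOn ℝ 1 (deriv φs) (Set.Ioo (-1:ℝ) 1) :=
    hφs.deriv_of_isOpen hopen (by norm_num)
  have hdc2 : ∀ y ∈ Set.Ioo (-1:ℝ) 1, HasDerivAt (deriv φc) (deriv (deriv φc) y) y := fun y hy =>
    ((hφc1.differentiableOn (by norm_num)).differentiableAt (hopen.mem_nhds hy)).hasDerivAt
  have hds2 : ∀ y ∈ Set.Ioo (-1:ℝ) 1, HasDerivAt (deriv φs) (deriv (deriv φs) y) y := fun y hy =>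
    ((hφs1.differentiableOn (by norm_num)).differentiableAt (hopen.mem_nhds hy)).hasDerivAt
  -- Step A: φs y = (2/3) * sf y on [0,1)
  have hG0 : ∀ y ∈ Set.Ioo (-1:ℝ) 1,
      HasDerivAt (fun y => qf y * deriv φs y * sf y - (3/2) * kf y * φs y) 0 y := by
    intro y hy
    have h := (((hasDerivAt_qf hy).mul (hds2 y hy)).mul (hasDerivAt_sf hy)).sub
      ((((hasDerivAt_kf hy).const_mul (3/2:ℝ)).mul (hds y hy)))
    refine h.congr_deriv (Eq.symm ?_)
    have hq2 := qf_sq hy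
    have hqne := (qf_pos hy).ne'
    have hode := hodes y hy
    simp only [Pi.mul_apply, Pi.sub_apply]
    field_simp
    linear_combination (-4 * sf y) * hode + (-4 * sf y * deriv (deriv φs) y) * hq2
  have hG1 : ∀ y ∈ Set.Ioo (-1:ℝ) 1,
      HasDerivAt (fun y => qf y * deriv φs y * kf y + (3/2) * sf y * φs y) 0 y := by
    intro y hy
    have h := (((hasDerivAt_qf hy).mul (hds2 y hy)).mul (hasDerivAt_kf hy)).add
      ((((hasDerivAt_sf hy).const_mul (3/2:ℝ)).mul (hds y hy)))
    refine h.congr_deriv (Eq.symm ?_)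
    have hq2 := qf_sq hy
    have hqne := (qf_pos hy).ne'
    have hode := hodes y hy
    simp only [Pi.mul_apply, Pi.sub_apply]
    field_simp
    linear_combination (-4 * kf y) * hode + (-4 * kf y * deriv (deriv φs) y) * hq2
  have hform : ∀ y, 0 ≤ y → y < 1 → φs y = (2/3) * sf y := by
    intro y h0 h1
    have e0 : qf y * deriv φs y * sf y - (3/2) * kf y * φs y = 0 := by
      have := eq_of_deriv_zero _ hG0 h0 h1
      simpa [qf_zero, sf_zero, kf_zero, h0s, h0s'] using this
    have e1 : qf y * deriv φs y * kf y + (3/2) * sf y * φs y = 1 := by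
      have := eq_of_deriv_zero _ hG1 h0 h1
      simpa [qf_zero, sf_zero, kf_zero, h0s, h0s'] using this
    have pyth : sf y ^ 2 + kf y ^ 2 = 1 := by
      have := Real.sin_sq_add_cos_sq ((3/2) * Real.arcsin y)
      simpa [sf, kf] using this
    linear_combination (2/3) * sf y * e1 - (2/3) * kf y * e0 - φs y * pyth
  have hφspos : ∀ x ∈ Set.Ioo 0 y₀, 0 < φs x := by
    intro x hx
    have h1 : x < 1 := lt_of_lt_of_le hx.2 hy₀1
    rw [hform x hx.1.le h1]
    have := sf_pos hx.1 h1
    linarith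
  -- Step B: positivity of the Wronskian
  have hFderiv : ∀ x ∈ Set.Ioo (-1:ℝ) 1,
      HasDerivAt (fun x => qf x * (deriv φc x * φs x - deriv φs x * φc x))
        ((|φc x| ^ ((4:ℝ)/3) * φc x * φs x) / qf x) x := by
    intro x hx
    have h := (hasDerivAt_qf hx).mul
      (((hdc2 x hx).mul (hds x hx)).sub ((hds2 x hx).mul (hdc x hx)))
    refine h.congr_deriv (Eq.symm ?_)
    have hq2 := qf_sq hx
    have hqne := (qf_pos hx).ne'
    have hoc := hodec x hx
    have hos := hodes x hx
    simp only [Pi.mul_apply, Pi.sub_apply]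
    field_simp
    linear_combination (-(φs x)) * hoc + (φc x) * hos +
      (φc x * deriv (deriv φs) x - φs x * deriv (deriv φc) x) * hq2
  have hWpos : ∀ x ∈ Set.Ioo 0 y₀, 0 < deriv φc x * φs x - deriv φs x * φc x := by
    intro x hx
    have hx1 : x ∈ Set.Ioo (-1:ℝ) 1 := hsub hx
    have hIcc : Set.Icc (0:ℝ) x ⊆ Set.Ioo (-1:ℝ) 1 := fun z hz =>
      ⟨by linarith [hz.1], lt_of_le_of_lt hz.2 hx1.2⟩
    have hcont : ContinuousOn (fun x => qf x * (deriv φc x * φs x - deriv φs x * φc x))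
        (Set.Icc 0 x) := fun z hz => (hFderiv z (hIcc hz)).continuousAt.continuousWithinAt
    obtain ⟨ξ, hξ, hval⟩ := exists_hasDerivAt_eq_slope
      (fun x => qf x * (deriv φc x * φs x - deriv φs x * φc x))
      (fun x => (|φc x| ^ ((4:ℝ)/3) * φc x * φs x) / qf x) hx.1 hcont
      (fun z hz => hFderiv z (hIcc ⟨hz.1.le, hz.2.le⟩))
    have hξ₀ : ξ ∈ Set.Ioo 0 y₀ := ⟨hξ.1, lt_trans hξ.2 hx.2⟩
    have hNpos : 0 < |φc ξ| ^ ((4:ℝ)/3) * φc ξ * φs ξ :=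
      mul_pos (mul_pos (Real.rpow_pos_of_pos (abs_pos.2 (hpos ξ hξ₀).ne') _) (hpos ξ hξ₀))
        (hφspos ξ hξ₀)
    have hqξ := qf_pos (hsub hξ₀)
    have hderivpos : 0 < (|φc ξ| ^ ((4:ℝ)/3) * φc ξ * φs ξ) / qf ξ := div_pos hNpos hqξ
    rw [hval] at hderivpos
    have hF0 : qf 0 * (deriv φc 0 * φs 0 - deriv φs 0 * φc 0) = 0 := by
      rw [h0c, h0s]; ring
    rw [hF0] at hderivpos
    have hFx : 0 < qf x * (deriv φc x * φs x - deriv φs x * φc x) := by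
      have hxpos := hx.1
      have := (div_pos_iff.1 hderivpos)
      rcases this with ⟨h1, _⟩ | ⟨_, h2⟩
      · linarith
      · linarith
    have hqx := qf_pos hx1
    nlinarith [hFx, hqx]
  -- Step C: ratio argument
  have hsub' : Set.Ioo 0 y₀ ⊆ Set.Ioo (-1:ℝ) 1 := hsub
  have hRd : ∀ x ∈ Set.Ioo 0 y₀, HasDerivAt (fun x => φc x / φs x)
      ((deriv φc x * φs x - deriv φs x * φc x) / (φs x) ^ 2) x := by
    intro x hx
    have h := (hdc x (hsub hx)).div (hds x (hsub hx)) (hφspos x hx).ne'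
    refine h.congr_deriv (Eq.symm ?_)
    ring
  have hmono : StrictMonoOn (fun x => φc x / φs x) (Set.Ioo 0 y₀) := by
    apply strictMonoOn_of_deriv_pos (convex_Ioo 0 y₀)
    · exact fun x hx => (hRd x hx).continuousAt.continuousWithinAt
    · intro x hx
      rw [interior_Ioo] at hx
      rw [(hRd x hx).deriv]
      exact div_pos (hWpos x hx) (pow_pos (hφspos x hx) 2)
  have hc0 : HasDerivAt φc c 0 := h0c' ▸ hdc 0 h0mem
  have hs0 : HasDerivAt φs 1 0 := h0s' ▸ hds 0 h0mem
  have hslopec : Filter.Tendsto (fun y => φc y / y) (nhdsWithin 0 (Set.Ioi 0)) (nhds c) := by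
    have h1 := (hasDerivAt_iff_tendsto_slope.1 hc0).mono_left
      (nhdsWithin_mono 0 (fun x (hx : x ∈ Set.Ioi (0:ℝ)) => ne_of_gt hx))
    refine h1.congr (fun y => ?_)
    rw [slope_def_field, h0c]
    simp
  have hslopes : Filter.Tendsto (fun y => φs y / y) (nhdsWithin 0 (Set.Ioi 0)) (nhds (1:ℝ)) := by
    have h1 := (hasDerivAt_iff_tendsto_slope.1 hs0).mono_left
      (nhdsWithin_mono 0 (fun x (hx : x ∈ Set.Ioi (0:ℝ)) => ne_of_gt hx))
    refine h1.congr (fun y => ?_)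
    rw [slope_def_field, h0s]
    simp
  have hR : Filter.Tendsto (fun x => φc x / φs x) (nhdsWithin 0 (Set.Ioi 0)) (nhds c) := by
    have h1 := hslopec.div hslopes one_ne_zero
    rw [div_one] at h1
    apply h1.congr'
    filter_upwards [self_mem_nhdsWithin] with z hz
    have hzne : (z:ℝ) ≠ 0 := ne_of_gt hz
    rcases eq_or_ne (φs z) 0 with h|h
    · simp [h]
    · simp only [Pi.div_apply]; field_simp
  intro y hy
  have hφsy : 0 < φs y := hφspos y hy
  have hm : y/2 ∈ Set.Ioo 0 y₀ := ⟨by linarith [hy.1], by linarith [hy.2]⟩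
  have h1 : c ≤ φc (y/2) / φs (y/2) := by
    apply le_of_tendsto hR
    filter_upwards [Ioo_mem_nhdsGT_of_mem (Set.mem_Ico.2 ⟨le_refl (0:ℝ), hm.1⟩)] with z hz
    exact (hmono ⟨hz.1, lt_trans hz.2 hm.2⟩ hm hz.2).le
  have h2 : φc (y/2) / φs (y/2) < φc y / φs y := hmono hm hy (by linarith [hy.1])
  have h3 : c < φc y / φs y := lt_of_le_of_lt h1 h2
  exact ⟨(lt_div_iff₀ hφsy).1 h3, mul_pos hc hφsy⟩
end

section
/- Let u ∈ C¹ be a radial solution of the wave equation u_{tt} − u_{rr} − (4/r)u_r = |u|^{4/3}u on a region containing {(r,t): R₁ ≤ r, |t| ≤ r − R₁}, and define I(r) = ∫_{−r+R₁}^{r−R₁} [ (1/2)|u_r(r,t)|² + (1/2)|u_t(r,t)|² + (3/10)|u(r,t)|^{10/3} ] dt for r > R₁. Then I'(r) ≥ −(8/r) I(r) for r > R₁; consequently, by a backward Gronwall inequality, I(r) ≤ (r/R')^{−8} I(R') for all R₁ < r < R'. -/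
open Set MeasureTheory intervalIntegral


lemma hphi (x : ℝ) : HasDerivAt (fun y : ℝ => |y| ^ ((10:ℝ)/3))
    ((10/3) * |x| ^ ((4:ℝ)/3) * x) x := by
  rcases lt_trichotomy x 0 with hx | hx | hx
  · have h1 : HasDerivAt (fun y : ℝ => (-y) ^ ((10:ℝ)/3))
        (((10:ℝ)/3) * (-x) ^ ((10:ℝ)/3 - 1) * (-1)) x := by
      exact (Real.hasDerivAt_rpow_const (Or.inl (by linarith))).comp x (hasDerivAt_neg x)
    have h2 : (fun y : ℝ => |y| ^ ((10:ℝ)/3)) =ᶠ[nhds x] fun y => (-y) ^ ((10:ℝ)/3) :=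
      Filter.eventuallyEq_of_mem (Iio_mem_nhds hx)
        (fun y (hy : y ∈ Iio 0) => by rw [abs_of_neg (mem_Iio.1 hy)])
    refine (h1.congr_of_eventuallyEq h2).congr_deriv ?_
    rw [abs_of_neg hx]
    rw [show (10:ℝ)/3 - 1 = (4:ℝ)/3 + 1 by norm_num,
      Real.rpow_add (by linarith : (0:ℝ) < -x), Real.rpow_one]
    ring
  · subst hx
    rw [hasDerivAt_iff_isLittleO]
    simp only [abs_zero, Real.zero_rpow (by norm_num : ((10:ℝ)/3) ≠ 0), mul_zero, sub_zero,
      smul_zero, sub_zero]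
    rw [Asymptotics.isLittleO_iff]
    intro c hc
    have : ∀ᶠ y : ℝ in nhds 0, |y| < min 1 c := by
      simpa using eventually_abs_sub_lt (0:ℝ) (lt_min one_pos hc)
    filter_upwards [this] with y hy
    rcases eq_or_ne y 0 with rfl | hy0
    · simp
    · have hay : 0 < |y| := abs_pos.2 hy0
      have : |y| ^ ((10:ℝ)/3) = |y| ^ ((7:ℝ)/3) * |y| := by
        rw [show (10:ℝ)/3 = (7:ℝ)/3 + 1 by norm_num, Real.rpow_add hay, Real.rpow_one]
      rw [Real.norm_eq_abs, abs_of_nonneg (Real.rpow_nonneg (abs_nonneg y) _), this]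
      have h7 : |y| ^ ((7:ℝ)/3) ≤ |y| ^ (1:ℝ) :=
        Real.rpow_le_rpow_of_exponent_ge hay (le_of_lt (lt_of_lt_of_le hy (min_le_left _ _)))
          (by norm_num)
      rw [Real.rpow_one] at h7
      calc |y| ^ ((7:ℝ)/3) * |y| ≤ |y| * |y| := by
            exact mul_le_mul_of_nonneg_right h7 (abs_nonneg y)
        _ ≤ c * ‖y‖ := by
            rw [Real.norm_eq_abs]
            exact mul_le_mul_of_nonneg_right
              (le_of_lt (lt_of_lt_of_le hy (min_le_right _ _))) (abs_nonneg y)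
  · have h1 : HasDerivAt (fun y : ℝ => y ^ ((10:ℝ)/3))
        (((10:ℝ)/3) * x ^ ((10:ℝ)/3 - 1)) x :=
      Real.hasDerivAt_rpow_const (Or.inl (ne_of_gt hx))
    have h2 : (fun y : ℝ => |y| ^ ((10:ℝ)/3)) =ᶠ[nhds x] fun y => y ^ ((10:ℝ)/3) :=
      Filter.eventuallyEq_of_mem (Ioi_mem_nhds hx)
        (fun y (hy : y ∈ Ioi 0) => by rw [abs_of_pos (mem_Ioi.1 hy)])
    refine (h1.congr_of_eventuallyEq h2).congr_deriv ?_
    rw [abs_of_pos hx, show (10:ℝ)/3 - 1 = (4:ℝ)/3 + 1 by norm_num,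
      Real.rpow_add hx, Real.rpow_one]
    ring


lemma hmove (F : ℝ → ℝ → ℝ) (hF : Continuous fun p : ℝ × ℝ => F p.1 p.2)
    (m c r₀ : ℝ) :
    HasDerivAt (fun r => ∫ t in c..(c + m * (r - r₀)), F r t) (m * F r₀ c) r₀ := by
  rw [hasDerivAt_iff_isLittleO]
  rw [Asymptotics.isLittleO_iff]
  intro ε hε
  have hc : ContinuousAt (fun p : ℝ × ℝ => F p.1 p.2) (r₀, c) := hF.continuousAt
  rw [Metric.continuousAt_iff] at hc
  obtain ⟨δ, hδ, hclose⟩ := hc (ε/(|m|+1)) (div_pos hε (by positivity))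
  have hδ' : 0 < δ / (|m| + 1) := div_pos hδ (by positivity)
  filter_upwards [Metric.ball_mem_nhds r₀ hδ'] with r hr
  rw [Metric.mem_ball, Real.dist_eq] at hr
  have hint : ∀ t ∈ uIoc c (c + m * (r - r₀)), ‖F r t - F r₀ c‖ ≤ ε/(|m|+1) := by
    intro t ht
    have htc : |t - c| ≤ |m| * |r - r₀| := by
      rcases le_total c (c + m * (r - r₀)) with h | h
      · rw [uIoc_of_le h] at ht
        rw [abs_of_nonneg (by linarith [ht.1.le])]
        calc t - c ≤ m * (r - r₀) := by linarith [ht.2]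
          _ ≤ |m * (r - r₀)| := le_abs_self _
          _ = |m| * |r - r₀| := abs_mul _ _
      · rw [uIoc_of_ge h] at ht
        rw [abs_of_nonpos (by linarith [ht.2])]
        calc -(t - c) ≤ -(m * (r - r₀)) := by linarith [ht.1]
          _ ≤ |m * (r - r₀)| := neg_le_abs _
          _ = |m| * |r - r₀| := abs_mul _ _
    have hd : dist ((r, t) : ℝ × ℝ) (r₀, c) < δ := by
      rw [Prod.dist_eq, Real.dist_eq, Real.dist_eq]
      refine max_lt (lt_of_lt_of_le hr ?_) (lt_of_le_of_lt htc ?_)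
      · exact div_le_self hδ.le (by linarith [abs_nonneg m])
      · calc |m| * |r - r₀| < |m| * (δ / (|m| + 1)) + δ / (|m| + 1) := by
              nlinarith [abs_nonneg m, abs_nonneg (r - r₀)]
          _ = δ := by field_simp
    exact (hclose hd).le
  have hintg : IntervalIntegrable (F r) volume c (c + m * (r - r₀)) :=
    (hF.comp (continuous_const.prodMk continuous_id)).intervalIntegrable _ _
  have key : (∫ t in c..(c + m * (r - r₀)), F r t) - (r - r₀) • (m * F r₀ c)
      = ∫ t in c..(c + m * (r - r₀)), (F r t - F r₀ c) := by
    rw [intervalIntegral.integral_sub hintg (intervalIntegrable_const),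
      intervalIntegral.integral_const]
    simp only [smul_eq_mul]
    ring_nf
  have h0 : (∫ t in c..c, F r₀ t) = 0 := intervalIntegral.integral_same
  calc ‖(∫ t in c..(c + m * (r - r₀)), F r t) - (∫ t in c..(c + m * 
        (r₀ - r₀)), F r₀ t) - (r - r₀) • (m * F r₀ c)‖
      = ‖∫ t in c..(c + m * (r - r₀)), (F r t - F r₀ c)‖ := by
        rw [show c + m * (r₀ - r₀) = c by ring] at *
        rw [h0, sub_zero, key]
    _ ≤ (ε/(|m|+1)) * |(c + m * (r - r₀)) - c| :=
        intervalIntegral.norm_integral_le_of_norm_le_const hint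
    _ ≤ ε * ‖r - r₀‖ := by
        rw [Real.norm_eq_abs, show c + m * (r - r₀) - c = m * (r - r₀) by ring, abs_mul]
        have hm1 : |m| / (|m| + 1) ≤ 1 := by
          rw [div_le_one (by positivity)]; linarith
        calc ε/(|m|+1) * (|m| * |r - r₀|) = (|m|/(|m|+1)) * (ε * |r - r₀|) := by ring
          _ ≤ 1 * (ε * |r - r₀|) := mul_le_mul_of_nonneg_right hm1 (by positivity)
          _ = ε * |r - r₀| := one_mul _


noncomputable def pd1 (f : ℝ × ℝ → ℝ) (p : ℝ × ℝ) : ℝ := fderiv ℝ f p (1, 0)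
noncomputable def pd2 (f : ℝ × ℝ → ℝ) (p : ℝ × ℝ) : ℝ := fderiv ℝ f p (0, 1)

lemma hasDerivAt_pd1 {f : ℝ × ℝ → ℝ} {r t : ℝ} (hf : DifferentiableAt ℝ f (r, t)) :
    HasDerivAt (fun ρ => f (ρ, t)) (pd1 f (r, t)) r := by
  have h1 : HasDerivAt (fun ρ : ℝ => ((ρ, t) : ℝ × ℝ)) ((1, 0) : ℝ × ℝ) r :=
    (hasDerivAt_id r).prodMk (hasDerivAt_const r t)
  exact hf.hasFDerivAt.comp_hasDerivAt r h1

lemma hasDerivAt_pd2 {f : ℝ × ℝ → ℝ} {r t : ℝ} (hf : DifferentiableAt ℝ f (r, t)) :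
    HasDerivAt (fun s => f (r, s)) (pd2 f (r, t)) t := by
  have h1 : HasDerivAt (fun s : ℝ => ((r, s) : ℝ × ℝ)) ((0, 1) : ℝ × ℝ) t :=
    (hasDerivAt_const t r).prodMk (hasDerivAt_id t)
  exact hf.hasFDerivAt.comp_hasDerivAt t h1

lemma contDiff_pd1 {f : ℝ × ℝ → ℝ} (hf : ContDiff ℝ 2 f) : ContDiff ℝ 1 (pd1 f) :=
  (hf.fderiv_right (by rw [one_add_one_eq_two] : (1:WithTop ℕ∞) + 1 ≤ 2)).clm_apply contDiff_const

lemma contDiff_pd2 {f : ℝ × ℝ → ℝ} (hf : ContDiff ℝ 2 f) : ContDiff ℝ 1 (pd2 f) :=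
  (hf.fderiv_right (by rw [one_add_one_eq_two] : (1:WithTop ℕ∞) + 1 ≤ 2)).clm_apply contDiff_const

lemma fderiv_pd_apply {f : ℝ × ℝ → ℝ} (hf : ContDiff ℝ 2 f) (p : ℝ × ℝ) (v w : ℝ × ℝ) :
    fderiv ℝ (fun q => fderiv ℝ f q v) p w = fderiv ℝ (fderiv ℝ f) p w v := by
  have h : DifferentiableAt ℝ (fderiv ℝ f) p :=
    ((hf.fderiv_right (by rw [one_add_one_eq_two] : (1:WithTop ℕ∞) + 1 ≤ 2)).differentiable one_ne_zero) p
  have : (fun q => fderiv ℝ f q v)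
      = (ContinuousLinearMap.apply ℝ ℝ v) ∘ (fderiv ℝ f) := rfl
  rw [this, fderiv_comp p (ContinuousLinearMap.apply ℝ ℝ v).differentiableAt h]
  simp

lemma clairaut {f : ℝ × ℝ → ℝ} (hf : ContDiff ℝ 2 f) (p : ℝ × ℝ) :
    pd2 (pd1 f) p = pd1 (pd2 f) p := by
  have hs : IsSymmSndFDerivAt ℝ f p := hf.contDiffAt.isSymmSndFDerivAt (by norm_num)
  unfold pd1 pd2
  rw [fderiv_pd_apply hf p (1,0) (0,1), fderiv_pd_apply hf p (0,1) (1,0)]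
  exact hs.eq _ _

lemma hphi' (x : ℝ) : HasDerivAt (fun y : ℝ => |y| ^ ((10:ℝ)/3))
    ((10/3) * |x| ^ ((4:ℝ)/3) * x) x := hphi x

noncomputable def eF (U : ℝ × ℝ → ℝ) (p : ℝ × ℝ) : ℝ :=
  (pd1 U p)^2/2 + (pd2 U p)^2/2 + (3/10) * |U p| ^ ((10:ℝ)/3)

noncomputable def eG (U : ℝ × ℝ → ℝ) (p : ℝ × ℝ) : ℝ :=
  pd1 U p * pd1 (pd1 U) p + pd2 U p * pd1 (pd2 U) p
    + |U p| ^ ((4:ℝ)/3) * U p * pd1 U p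

lemma cont_phi : Continuous (fun x : ℝ => |x| ^ ((10:ℝ)/3)) :=
  (Differentiable.continuous (fun x => (hphi' x).differentiableAt))

lemma cont_pd1 {f : ℝ × ℝ → ℝ} (hf : ContDiff ℝ 1 f) : Continuous (pd1 f) :=
  (hf.continuous_fderiv one_ne_zero).clm_apply continuous_const

lemma cont_pd2 {f : ℝ × ℝ → ℝ} (hf : ContDiff ℝ 1 f) : Continuous (pd2 f) :=
  (hf.continuous_fderiv one_ne_zero).clm_apply continuous_const

lemma cont_eF {U : ℝ × ℝ → ℝ} (hU : ContDiff ℝ 2 U) : Continuous (eF U) := by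
  have h1 := cont_pd1 (hU.of_le (by norm_num))
  have h2 := cont_pd2 (hU.of_le (by norm_num))
  exact (((h1.pow 2).div_const 2).add ((h2.pow 2).div_const 2)).add
    (continuous_const.mul (cont_phi.comp hU.continuous))

lemma cont_eG {U : ℝ × ℝ → ℝ} (hU : ContDiff ℝ 2 U) : Continuous (eG U) := by
  have h1 := cont_pd1 (hU.of_le (by norm_num))
  have h2 := cont_pd2 (hU.of_le (by norm_num))
  have h11 := cont_pd1 (contDiff_pd1 hU)
  have h21 := cont_pd1 (contDiff_pd2 hU)
  have h43 : Continuous (fun x : ℝ => |x| ^ ((4:ℝ)/3)) :=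
    continuous_abs.rpow_const (fun x => Or.inr (by norm_num))
  exact ((h1.mul h11).add (h2.mul h21)).add
    (((h43.comp hU.continuous).mul hU.continuous).mul h1)

lemma hasDerivAt_eF {U : ℝ × ℝ → ℝ} (hU : ContDiff ℝ 2 U) (r t : ℝ) :
    HasDerivAt (fun ρ => eF U (ρ, t)) (eG U (r, t)) r := by
  have hUd : Differentiable ℝ U := hU.differentiable (by norm_num)
  have hVd : Differentiable ℝ (pd1 U) := (contDiff_pd1 hU).differentiable one_ne_zero
  have hWd : Differentiable ℝ (pd2 U) := (contDiff_pd2 hU).differentiable one_ne_zero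
  have hU1 : HasDerivAt (fun ρ => U (ρ, t)) (pd1 U (r, t)) r := hasDerivAt_pd1 (hUd _)
  have hV1 : HasDerivAt (fun ρ => pd1 U (ρ, t)) (pd1 (pd1 U) (r, t)) r :=
    hasDerivAt_pd1 (hVd _)
  have hW1 : HasDerivAt (fun ρ => pd2 U (ρ, t)) (pd1 (pd2 U) (r, t)) r :=
    hasDerivAt_pd1 (hWd _)
  have hphi1 : HasDerivAt (fun ρ => |U (ρ, t)| ^ ((10:ℝ)/3))
      ((10/3) * |U (r, t)| ^ ((4:ℝ)/3) * U (r, t) * pd1 U (r, t)) r :=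
    HasDerivAt.comp (h₂ := fun y : ℝ => |y| ^ ((10:ℝ)/3)) r (hphi' (U (r, t))) hU1
  have h := (((hV1.pow 2).div_const 2).add ((hW1.pow 2).div_const 2)).add
    (hphi1.const_mul (3/10))
  refine h.congr_deriv ?_
  unfold eG
  push_cast
  ring

lemma hasDerivAt_prod_t {U : ℝ × ℝ → ℝ} (hU : ContDiff ℝ 2 U) (r t : ℝ) :
    HasDerivAt (fun s => pd1 U (r, s) * pd2 U (r, s))
      (pd2 (pd1 U) (r, t) * pd2 U (r, t) + pd1 U (r, t) * pd2 (pd2 U) (r, t)) t := by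
  have hVd : Differentiable ℝ (pd1 U) := (contDiff_pd1 hU).differentiable one_ne_zero
  have hWd : Differentiable ℝ (pd2 U) := (contDiff_pd2 hU).differentiable one_ne_zero
  exact (hasDerivAt_pd2 (hVd _)).mul (hasDerivAt_pd2 (hWd _))

lemma hasDerivAt_A {U : ℝ × ℝ → ℝ} (hU : ContDiff ℝ 2 U) (a b r₀ : ℝ) :
    HasDerivAt (fun r => ∫ t in a..b, eF U (r, t)) (∫ t in a..b, eG U (r₀, t)) r₀ := by
  have hFec := cont_eF hU
  have hGec := cont_eG hU
  -- bound for eG on compact set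
  obtain ⟨M, hM⟩ : ∃ M, ∀ p ∈ Icc (r₀ - 1) (r₀ + 1) ×ˢ uIcc a b, ‖eG U p‖ ≤ M := by
    obtain ⟨M, hM⟩ := (isCompact_Icc.prod isCompact_uIcc).exists_bound_of_continuousOn
      hGec.continuousOn
    exact ⟨M, hM⟩
  have key := intervalIntegral.hasDerivAt_integral_of_dominated_loc_of_deriv_le
    (F := fun r t => eF U (r, t)) (F' := fun r t => eG U (r, t)) (x₀ := r₀)
    (a := a) (b := b) (μ := volume) (bound := fun _ => M) (s := Metric.ball r₀ 1) (Metric.ball_mem_nhds r₀ one_pos)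
    ?_ ?_ ?_ ?_ ?_ ?_
  · exact key.2
  · exact Filter.Eventually.of_forall fun x =>
      ((hFec.comp (continuous_const.prodMk continuous_id)).aestronglyMeasurable)
  · exact (hFec.comp (continuous_const.prodMk continuous_id)).intervalIntegrable _ _
  · exact ((hGec.comp (continuous_const.prodMk continuous_id)).aestronglyMeasurable)
  · refine Filter.Eventually.of_forall fun t ht x hx => hM (x, t) ?_
    rw [Metric.mem_ball, Real.dist_eq] at hx
    exact ⟨⟨by linarith [abs_lt.1 hx |>.1], by linarith [abs_lt.1 hx |>.2]⟩,
      uIoc_subset_uIcc ht⟩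
  · exact intervalIntegrable_const
  · exact Filter.Eventually.of_forall fun t _ x _ => hasDerivAt_eF hU x t

/-- for a radial `C²` solution of
`u_{tt} − u_{rr} − (4/r)u_r = |u|^{4/3}u` on a region containing
`{(r,t) : R₁ ≤ r, |t| ≤ r − R₁}`, the characteristic energy
`I(r) = ∫_{-r+R₁}^{r-R₁} (½u_r² + ½u_t² + (3/10)|u|^{10/3}) dt` satisfies
`I'(r) ≥ −(8/r) I(r)`, and hence (backward Gronwall)
`I(r) ≤ (r/R')^{-8} I(R')` for `R₁ < r < R'`. -/
theorem stmt13 (R₁ : ℝ) (hR₁ : 0 < R₁) (u : ℝ → ℝ → ℝ)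
    (hreg : ContDiff ℝ 2 fun p : ℝ × ℝ => u p.1 p.2)
    (heq : ∀ r t : ℝ, R₁ ≤ r → |t| ≤ r - R₁ →
      deriv (deriv (u r)) t - deriv (deriv (fun ρ => u ρ t)) r
        - (4/r) * deriv (fun ρ => u ρ t) r = |u r t| ^ ((4:ℝ)/3) * u r t)
    (I : ℝ → ℝ)
    (hI : ∀ r, I r = ∫ t in (-r + R₁)..(r - R₁),
      ((deriv (fun ρ => u ρ t) r)^2/2 + (deriv (u r) t)^2/2
        + (3/10) * |u r t| ^ ((10:ℝ)/3))) :
    (∀ r : ℝ, R₁ < r → -(8/r) * I r ≤ deriv I r) ∧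
    ∀ r R' : ℝ, R₁ < r → r < R' → I r ≤ (r/R') ^ (-8 : ℤ) * I R' := by
  set U : ℝ × ℝ → ℝ := fun p => u p.1 p.2 with hUdef
  have hU : ContDiff ℝ 2 U := hreg
  have hUd : Differentiable ℝ U := hU.differentiable (by norm_num)
  have hVd : Differentiable ℝ (pd1 U) := (contDiff_pd1 hU).differentiable one_ne_zero
  have hWd : Differentiable ℝ (pd2 U) := (contDiff_pd2 hU).differentiable one_ne_zero
  have hv : ∀ r t : ℝ, deriv (fun ρ => u ρ t) r = pd1 U (r, t) :=
    fun r t => (hasDerivAt_pd1 (hUd (r, t))).deriv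
  have hw : ∀ r t : ℝ, deriv (u r) t = pd2 U (r, t) :=
    fun r t => (hasDerivAt_pd2 (hUd (r, t))).deriv
  have hI' : ∀ r : ℝ, I r = ∫ t in (-r + R₁)..(r - R₁), eF U (r, t) := by
    intro r
    rw [hI r]
    refine intervalIntegral.integral_congr fun t _ => ?_
    simp only [eF, hv, hw]
    rfl
  have hPDE : ∀ r t : ℝ, R₁ ≤ r → |t| ≤ r - R₁ →
      pd1 (pd1 U) (r, t) = pd2 (pd2 U) (r, t) - (4/r) * pd1 U (r, t)
        - |U (r, t)| ^ ((4:ℝ)/3) * U (r, t) := by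
    intro r t h1 h2
    have h := heq r t h1 h2
    have e1 : deriv (u r) = fun s => pd2 U (r, s) := funext fun s => hw r s
    have e2 : deriv (fun ρ => u ρ t) = fun ρ => pd1 U (ρ, t) := funext fun ρ => hv ρ t
    simp only [e1, e2] at h
    have e3 : deriv (fun s => pd2 U (r, s)) t = pd2 (pd2 U) (r, t) :=
      (hasDerivAt_pd2 (hWd _)).deriv
    have e4 : deriv (fun ρ => pd1 U (ρ, t)) r = pd1 (pd1 U) (r, t) :=
      (hasDerivAt_pd1 (hVd _)).deriv
    rw [e3, e4] at h
    have e5 : |u r t| ^ ((4:ℝ)/3) * u r t = |U (r, t)| ^ ((4:ℝ)/3) * U (r, t) := rfl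
    rw [e5] at h
    linarith
  have hFeC : ∀ r : ℝ, Continuous fun t => eF U (r, t) := fun r =>
    (cont_eF hU).comp (continuous_const.prodMk continuous_id)
  have hint : ∀ (r c d : ℝ), IntervalIntegrable (fun t => eF U (r, t)) volume c d :=
    fun r c d => ((hFeC r).intervalIntegrable _ _)
  have key : ∀ r₀ : ℝ, R₁ < r₀ → ∃ E, HasDerivAt I E r₀ ∧ -(8/r₀) * I r₀ ≤ E := by
    intro r₀ hr₀
    have hr0 : 0 < r₀ := lt_trans hR₁ hr₀
    set a₀ : ℝ := -r₀ + R₁ with ha₀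
    set b₀ : ℝ := r₀ - R₁ with hb₀
    have hab : a₀ ≤ b₀ := by rw [ha₀, hb₀]; linarith
    have hdec : ∀ r : ℝ, I r = -(∫ t in a₀..(a₀ + (-1) * (r - r₀)), eF U (r, t))
        + (∫ t in a₀..b₀, eF U (r, t)) + (∫ t in b₀..(b₀ + 1 * (r - r₀)), eF U (r, t)) := by
      intro r
      have e1 : a₀ + (-1) * (r - r₀) = -r + R₁ := by rw [ha₀]; ring
      have e2 : b₀ + 1 * (r - r₀) = r - R₁ := by rw [hb₀]; ring
      rw [e1, e2, hI' r]
      have h12 : (∫ t in (-r + R₁)..(r - R₁), eF U (r, t))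
          = (∫ t in (-r + R₁)..a₀, eF U (r, t)) + (∫ t in a₀..(r - R₁), eF U (r, t)) :=
        (intervalIntegral.integral_add_adjacent_intervals (hint r _ _) (hint r _ _)).symm
      have h34 : (∫ t in a₀..(r - R₁), eF U (r, t))
          = (∫ t in a₀..b₀, eF U (r, t)) + (∫ t in b₀..(r - R₁), eF U (r, t)) :=
        (intervalIntegral.integral_add_adjacent_intervals (hint r _ _) (hint r _ _)).symm
      have h5 : (∫ t in (-r + R₁)..a₀, eF U (r, t))
          = -(∫ t in a₀..(-r + R₁), eF U (r, t)) := intervalIntegral.integral_symm _ _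
      rw [h12, h34, h5]
      ring
    have hC := hmove (fun r t => eF U (r, t))
      ((cont_eF hU).comp (continuous_fst.prodMk continuous_snd)) (-1) a₀ r₀
    have hA := hasDerivAt_A hU a₀ b₀ r₀
    have hB := hmove (fun r t => eF U (r, t))
      ((cont_eF hU).comp (continuous_fst.prodMk continuous_snd)) 1 b₀ r₀
    have hDer := (hC.neg.add hA).add hB
    have hDerI : HasDerivAt I ((-(-1 * eF U (r₀, a₀)) + ∫ t in a₀..b₀, eG U (r₀, t))
        + 1 * eF U (r₀, b₀)) r₀ :=
      hDer.congr_of_eventuallyEq (Filter.Eventually.of_forall hdec)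
    refine ⟨_, hDerI, ?_⟩
    -- now the inequality for the explicit derivative value
    have hreg2 : ∀ t ∈ uIcc a₀ b₀, |t| ≤ r₀ - R₁ := by
      intro t ht
      rw [uIcc_of_le hab, ha₀, hb₀] at ht
      rw [abs_le]
      exact ⟨by linarith [ht.1], ht.2⟩
    have hDcont : Continuous fun t => pd2 (pd1 U) (r₀, t) * pd2 U (r₀, t)
        + pd1 U (r₀, t) * pd2 (pd2 U) (r₀, t) := by
      have c1 := (cont_pd2 (contDiff_pd1 hU)).comp
        ((continuous_const.prodMk continuous_id : Continuous fun t : ℝ => ((r₀, t) : ℝ × ℝ)))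
      have c2 := (cont_pd2 (hU.of_le (by norm_num))).comp
        ((continuous_const.prodMk continuous_id : Continuous fun t : ℝ => ((r₀, t) : ℝ × ℝ)))
      have c3 := (cont_pd1 (hU.of_le (by norm_num))).comp
        ((continuous_const.prodMk continuous_id : Continuous fun t : ℝ => ((r₀, t) : ℝ × ℝ)))
      have c4 := (cont_pd2 (contDiff_pd2 hU)).comp
        ((continuous_const.prodMk continuous_id : Continuous fun t : ℝ => ((r₀, t) : ℝ × ℝ)))
      exact (c1.mul c2).add (c3.mul c4)
    have hVsqcont : Continuous fun t => (pd1 U (r₀, t))^2 :=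
      ((cont_pd1 (hU.of_le (by norm_num))).comp
        ((continuous_const.prodMk continuous_id : Continuous fun t : ℝ => ((r₀, t) : ℝ × ℝ)))).pow 2
    have hGrw : (∫ t in a₀..b₀, eG U (r₀, t))
        = (pd1 U (r₀, b₀) * pd2 U (r₀, b₀) - pd1 U (r₀, a₀) * pd2 U (r₀, a₀))
          - (4/r₀) * ∫ t in a₀..b₀, (pd1 U (r₀, t))^2 := by
      have h1 : EqOn (fun t => eG U (r₀, t))
          (fun t => (pd2 (pd1 U) (r₀, t) * pd2 U (r₀, t)
            + pd1 U (r₀, t) * pd2 (pd2 U) (r₀, t)) - (4/r₀) * (pd1 U (r₀, t))^2)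
          (uIcc a₀ b₀) := by
        intro t ht
        have hP := hPDE r₀ t hr₀.le (hreg2 t ht)
        have hcl := clairaut hU (r₀, t)
        simp only [eG]
        rw [hP, ← hcl]
        ring
      rw [intervalIntegral.integral_congr h1,
        intervalIntegral.integral_sub (g := fun t => (4/r₀) * (pd1 U (r₀, t))^2) (hDcont.intervalIntegrable _ _)
          ((continuous_const.mul hVsqcont).intervalIntegrable _ _),
        intervalIntegral.integral_eq_sub_of_hasDerivAt
          (fun t _ => hasDerivAt_prod_t hU r₀ t) (hDcont.intervalIntegrable _ _),
        intervalIntegral.integral_const_mul]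
    have hIr₀ : I r₀ = ∫ t in a₀..b₀, eF U (r₀, t) := by
      rw [hI' r₀, ha₀, hb₀]
    have hVsq : (∫ t in a₀..b₀, (pd1 U (r₀, t))^2) ≤ 2 * I r₀ := by
      rw [hIr₀, ← intervalIntegral.integral_const_mul]
      refine intervalIntegral.integral_mono_on hab (hVsqcont.intervalIntegrable _ _)
        ((continuous_const.mul (hFeC r₀)).intervalIntegrable _ _) fun t _ => ?_
      simp only [eF]
      nlinarith [sq_nonneg (pd2 U (r₀, t)),
        Real.rpow_nonneg (abs_nonneg (U (r₀, t))) ((10:ℝ)/3)]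
    have hFb : 0 ≤ eF U (r₀, b₀) + pd1 U (r₀, b₀) * pd2 U (r₀, b₀) := by
      simp only [eF]
      nlinarith [sq_nonneg (pd1 U (r₀, b₀) + pd2 U (r₀, b₀)),
        Real.rpow_nonneg (abs_nonneg (U (r₀, b₀))) ((10:ℝ)/3)]
    have hFa : 0 ≤ eF U (r₀, a₀) - pd1 U (r₀, a₀) * pd2 U (r₀, a₀) := by
      simp only [eF]
      nlinarith [sq_nonneg (pd1 U (r₀, a₀) - pd2 U (r₀, a₀)),
        Real.rpow_nonneg (abs_nonneg (U (r₀, a₀))) ((10:ℝ)/3)]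
    rw [hGrw]
    have h4 : (0:ℝ) < 4/r₀ := by positivity
    have hmul : (4/r₀) * (∫ t in a₀..b₀, (pd1 U (r₀, t))^2) ≤ (4/r₀) * (2 * I r₀) :=
      mul_le_mul_of_nonneg_left hVsq h4.le
    have heq8 : (4/r₀) * (2 * I r₀) = (8/r₀) * I r₀ := by ring
    linarith
  constructor
  · intro r hr
    obtain ⟨E, hE, hle⟩ := key r hr
    rw [hE.deriv]
    exact hle
  · intro r R' hr hrR'
    have hr0 : 0 < r := lt_trans hR₁ hr
    have hR'0 : 0 < R' := lt_trans hr0 hrR'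
    set g : ℝ → ℝ := fun y => y^8 * I y with hg
    have hgd : ∀ x : ℝ, R₁ < x → ∃ D, HasDerivAt g D x ∧ 0 ≤ D := by
      intro x hx
      obtain ⟨E, hE, hle⟩ := key x hx
      have hx0 : 0 < x := lt_trans hR₁ hx
      have hd : HasDerivAt g (8*x^7 * I x + x^8 * E) x := by
        have h : HasDerivAt (fun y => y^8 * I y) _ x := (hasDerivAt_pow 8 x).mul hE
        convert h using 1 <;> norm_num
      refine ⟨_, hd, ?_⟩
      have h1 : x^8 * (-(8/x) * I x) ≤ x^8 * E :=
        mul_le_mul_of_nonneg_left hle (by positivity)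
      have h2 : x^8 * (-(8/x) * I x) = -(8 * x^7 * I x) := by
        field_simp
      linarith
    have hmono : MonotoneOn g (Icc r R') := by
      apply monotoneOn_of_deriv_nonneg (convex_Icc r R')
      · intro x hx
        obtain ⟨D, hd, _⟩ := hgd x (lt_of_lt_of_le hr hx.1)
        exact hd.continuousAt.continuousWithinAt
      · intro x hx
        rw [interior_Icc] at hx
        obtain ⟨D, hd, _⟩ := hgd x (lt_trans hr hx.1)
        exact hd.differentiableAt.differentiableWithinAt
      · intro x hx
        rw [interior_Icc] at hx
        obtain ⟨D, hd, hpos⟩ := hgd x (lt_trans hr hx.1)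
        rw [hd.deriv]
        exact hpos
    have hgle : g r ≤ g R' := hmono ⟨le_refl r, hrR'.le⟩ ⟨hrR'.le, le_refl R'⟩ hrR'.le
    have hz : (r/R') ^ (-8:ℤ) = R'^8 / r^8 := by
      rw [zpow_neg, show ((8:ℤ) : ℤ) = ((8:ℕ) : ℤ) from rfl, zpow_natCast, div_pow, inv_div]
    rw [hz, div_mul_eq_mul_div, le_div_iff₀ (by positivity : (0:ℝ) < r^8)]
    have hgle' : r^8 * I r ≤ R'^8 * I R' := hgle
    nlinarith [hgle']
end

section
/- Let λ > 0, γ ∈ (0, 1/10], and let J ∈ C²([t₁* − γλ, t₁* + γλ]) be nonnegative with J''(t)·J(t) ≥ (5/4)|J'(t)|² on this interval. Suppose M > 0 and γ₁ ∈ (0, γλ/5] are such that J''(t) ≥ M for all t ∈ [t₁* − γ₁, t₁* + γ₁]. Then J(t) ≥ γ₁² M / 8 for all t ∈ [t₁* − γ₁/2, t₁* + γ₁/2]. -/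
open Set Filter Topology

lemma tangent_line_le (f f' f'' : ℝ → ℝ) (a b : ℝ)
    (hd : ∀ u ∈ Icc a b, HasDerivAt f (f' u) u)
    (hd' : ∀ u ∈ Icc a b, HasDerivAt f' (f'' u) u)
    (hcv : ∀ u ∈ Icc a b, 0 ≤ f'' u)
    (c : ℝ) (hc : c ∈ Icc a b) (u : ℝ) (hu : u ∈ Icc a b) :
    f c + f' c * (u - c) ≤ f u := by
  have hmono : MonotoneOn f' (Icc a b) := by
    apply monotoneOn_of_deriv_nonneg (convex_Icc a b)
    · exact fun x hx => (hd' x hx).continuousAt.continuousWithinAt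
    · intro x hx
      rw [interior_Icc] at hx
      exact (hd' x (Ioo_subset_Icc_self hx)).differentiableAt.differentiableWithinAt
    · intro x hx
      rw [interior_Icc] at hx
      rw [(hd' x (Ioo_subset_Icc_self hx)).deriv]
      exact hcv x (Ioo_subset_Icc_self hx)
  set φ : ℝ → ℝ := fun u => f u - f c - f' c * (u - c) with hφ
  have hdφ : ∀ x ∈ Icc a b, HasDerivAt φ (f' x - f' c) x := by
    intro x hx
    have h1 := hd x hx
    have h2 : HasDerivAt (fun y => f' c * (y - c)) (f' c) x := by
      simpa using ((hasDerivAt_id x).sub_const c).const_mul (f' c)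
    exact (h1.sub_const (f c)).sub h2
  have key : φ c ≤ φ u := by
    rcases le_total c u with hcu | huc
    · have : MonotoneOn φ (Icc c u) := by
        apply monotoneOn_of_deriv_nonneg (convex_Icc c u)
        · intro x hx
          exact (hdφ x ⟨le_trans hc.1 hx.1, le_trans hx.2 hu.2⟩).continuousAt.continuousWithinAt
        · intro x hx
          rw [interior_Icc] at hx
          exact (hdφ x ⟨le_trans hc.1 hx.1.le, le_trans hx.2.le hu.2⟩).differentiableAt.differentiableWithinAt
        · intro x hx
          rw [interior_Icc] at hx
          have hx' : x ∈ Icc a b := ⟨le_trans hc.1 hx.1.le, le_trans hx.2.le hu.2⟩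
          rw [(hdφ x hx').deriv]
          exact sub_nonneg.2 (hmono hc hx' (le_of_lt hx.1))
      exact this ⟨le_refl c, hcu⟩ ⟨hcu, le_refl u⟩ hcu
    · have : AntitoneOn φ (Icc u c) := by
        apply antitoneOn_of_deriv_nonpos (convex_Icc u c)
        · intro x hx
          exact (hdφ x ⟨le_trans hu.1 hx.1, le_trans hx.2 hc.2⟩).continuousAt.continuousWithinAt
        · intro x hx
          rw [interior_Icc] at hx
          exact (hdφ x ⟨le_trans hu.1 hx.1.le, le_trans hx.2.le hc.2⟩).differentiableAt.differentiableWithinAt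
        · intro x hx
          rw [interior_Icc] at hx
          have hx' : x ∈ Icc a b := ⟨le_trans hu.1 hx.1.le, le_trans hx.2.le hc.2⟩
          rw [(hdφ x hx').deriv]
          exact sub_nonpos.2 (hmono hx' hc (le_of_lt hx.2))
      exact this ⟨le_refl u, huc⟩ ⟨huc, le_refl c⟩ huc
  simp only [hφ] at key
  linarith

lemma step_concave (J J' J'' : ℝ → ℝ) (s v : ℝ) (hsv : s ≤ v)
    (hd : ∀ u ∈ Icc s v, HasDerivAt J (J' u) u)
    (hd' : ∀ u ∈ Icc s v, HasDerivAt J' (J'' u) u)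
    (hpos : ∀ u ∈ Icc s v, 0 < J u)
    (hvir : ∀ u ∈ Icc s v, (5/4) * (J' u)^2 ≤ J'' u * J u) :
    (J v) ^ (-(1/4) : ℝ) ≤ (J s) ^ (-(1/4) : ℝ)
      + (J' s * (-(1/4)) * (J s) ^ ((-(1/4) : ℝ) - 1)) * (v - s) := by
  set e : ℝ := -(1/4) with he
  set K : ℝ → ℝ := fun u => -((J u) ^ e) with hK
  set K₁ : ℝ → ℝ := fun u => -(J' u * e * (J u) ^ (e - 1)) with hK₁
  set K₂ : ℝ → ℝ := fun u =>
    -((J'' u * e) * (J u) ^ (e - 1) + (J' u * e) * (J' u * (e - 1) * (J u) ^ (e - 1 - 1))) with hK₂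
  have hdK : ∀ u ∈ Icc s v, HasDerivAt K (K₁ u) u := by
    intro u hu
    exact ((hd u hu).rpow_const (Or.inl (hpos u hu).ne')).neg
  have hdK₁ : ∀ u ∈ Icc s v, HasDerivAt K₁ (K₂ u) u := by
    intro u hu
    have h1 : HasDerivAt (fun x => J' x * e) (J'' u * e) u := (hd' u hu).mul_const e
    have h2 : HasDerivAt (fun x => (J x) ^ (e - 1)) (J' u * (e - 1) * (J u) ^ (e - 1 - 1)) u :=
      (hd u hu).rpow_const (Or.inl (hpos u hu).ne')
    exact (h1.mul h2).neg
  have hcv : ∀ u ∈ Icc s v, 0 ≤ K₂ u := by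
    intro u hu
    have hJ := hpos u hu
    have hv := hvir u hu
    have hP2 : (0:ℝ) < (J u) ^ (e - 1 - 1) := Real.rpow_pos_of_pos hJ _
    have hsplit : (J u) ^ (e - 1) = (J u) ^ (e - 1 - 1) * J u := by
      rw [← Real.rpow_add_one hJ.ne']
      ring_nf
    simp only [hK₂, hsplit]
    rw [he] at hP2 ⊢
    nlinarith [mul_nonneg hP2.le (sub_nonneg.2 hv)]
  have := tangent_line_le K K₁ K₂ s v hdK hdK₁ hcv s ⟨le_refl s, hsv⟩ v ⟨hsv, le_refl v⟩
  simp only [hK, hK₁, he] at this ⊢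
  linarith

set_option maxHeartbeats 1000000 in
lemma stmt14_aux (lam γ t₁ M γ₁ : ℝ) (J J' J'' : ℝ → ℝ)
    (hlam : 0 < lam) (hγ : 0 < γ) (hγ' : γ ≤ 1/10)
    (hdJ : ∀ t ∈ Set.Icc (t₁ - γ*lam) (t₁ + γ*lam), HasDerivAt J (J' t) t)
    (hdJ' : ∀ t ∈ Set.Icc (t₁ - γ*lam) (t₁ + γ*lam), HasDerivAt J' (J'' t) t)
    (hJnn : ∀ t ∈ Set.Icc (t₁ - γ*lam) (t₁ + γ*lam), 0 ≤ J t)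
    (hvir : ∀ t ∈ Set.Icc (t₁ - γ*lam) (t₁ + γ*lam), (5/4) * (J' t)^2 ≤ J'' t * J t)
    (hM : 0 < M) (hγ₁ : 0 < γ₁) (hγ₁' : γ₁ ≤ γ*lam/5)
    (hlow : ∀ t ∈ Set.Icc (t₁ - γ₁) (t₁ + γ₁), M ≤ J'' t) :
    ∀ t ∈ Set.Icc (t₁ - γ₁/2) t₁, γ₁^2 * M / 8 ≤ J t := by
  intro t ht
  by_contra hcon
  push_neg at hcon
  have hgl : 0 < γ * lam := mul_pos hγ hlam
  set s : ℝ := t + γ₁/2 with hs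
  have hts : t ≤ s := by rw [hs]; linarith
  have hsmem1 : s ∈ Icc (t₁ - γ₁) (t₁ + γ₁) := ⟨by rw [hs]; linarith [ht.1], by rw [hs]; linarith [ht.2]⟩
  have hsub1 : Icc (t₁ - γ₁) (t₁ + γ₁) ⊆ Icc (t₁ - γ*lam) (t₁ + γ*lam) :=
    Icc_subset_Icc (by linarith) (by linarith)
  have htmem1 : t ∈ Icc (t₁ - γ₁) (t₁ + γ₁) := ⟨by linarith [ht.1], by linarith [ht.2]⟩
  have hts_sub : Icc t s ⊆ Icc (t₁ - γ₁) (t₁ + γ₁) :=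
    Icc_subset_Icc htmem1.1 hsmem1.2
  have hsbig := hsub1 hsmem1
  -- Step B: J s < γ₁/2 * J' s
  have hB := tangent_line_le
      (fun u => J u - J' s * (u - s) - M * (u - s)^2 / 2)
      (fun u => J' u - J' s - M * (u - s))
      (fun u => J'' u - M) t s
      (by
        intro u hu
        have h1 := hdJ u (hsub1 (hts_sub hu))
        have h2 : HasDerivAt (fun y => J' s * (y - s)) (J' s) u := by
          simpa using ((hasDerivAt_id u).sub_const s).const_mul (J' s)
        have h3 : HasDerivAt (fun y => M * (y - s)^2 / 2) (M * (u - s)) u := by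
          have := ((((hasDerivAt_id u).sub_const s).pow 2).const_mul M).div_const 2
          refine this.congr_deriv ?_
          simp only [id_eq]
          push_cast
          ring
        exact (h1.sub h2).sub h3)
      (by
        intro u hu
        have hM3 : HasDerivAt (fun y => M * (y - s)) M u := by
          simpa using ((hasDerivAt_id u).sub_const s).const_mul M
        exact ((hdJ' u (hsub1 (hts_sub hu))).sub_const (J' s)).sub hM3)
      (by intro u hu; exact sub_nonneg.2 (hlow u (hts_sub hu)))
      s ⟨hts, le_refl s⟩ t ⟨le_refl t, hts⟩
  have hst : t - s = -(γ₁/2) := by rw [hs]; ring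
  rw [hst] at hB
  have hJs : J s < γ₁/2 * J' s := by nlinarith [hB, hcon]
  have hJ's : 0 < J' s := by nlinarith [hJnn s hsbig]
  have hJspos : 0 < J s := by
    rcases (hJnn s hsbig).lt_or_eq with h | h
    · exact h
    · exfalso
      have hv := hvir s hsbig
      rw [← h] at hv
      nlinarith
  set w : ℝ := s + 4 * J s / J' s with hw
  have hws : s < w := by
    have : 0 < 4 * J s / J' s := by positivity
    rw [hw]; linarith
  have hw2 : w < s + 2*γ₁ := by
    have : 4 * J s / J' s < 2*γ₁ := by
      rw [div_lt_iff₀ hJ's]; nlinarith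
    rw [hw]; linarith
  have hsw_big : Icc s w ⊆ Icc (t₁ - γ*lam) (t₁ + γ*lam) := by
    apply Icc_subset_Icc
    · linarith [hsmem1.1]
    · linarith [hsmem1.2]
  -- positivity of J on [s, w]
  have hpos : ∀ u ∈ Icc s w, 0 < J u := by
    by_contra hnp
    push_neg at hnp
    obtain ⟨u₁, hu₁, hu₁'⟩ := hnp
    set Z : Set ℝ := Icc s w ∩ J ⁻¹' (Iic 0) with hZ
    have hZne : Z.Nonempty := ⟨u₁, hu₁, hu₁'⟩
    have hJcont : ContinuousOn J (Icc s w) := fun x hx =>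
      (hdJ x (hsw_big hx)).continuousAt.continuousWithinAt
    have hZclosed : IsClosed Z :=
      hJcont.preimage_isClosed_of_isClosed isClosed_Icc isClosed_Iic
    have hZbdd : BddBelow Z := bddBelow_Icc.mono (inter_subset_left)
    set u₀ : ℝ := sInf Z with hu₀
    have hu₀Z : u₀ ∈ Z := hZclosed.csInf_mem hZne hZbdd
    have hsu₀ : s < u₀ := by
      rcases hu₀Z.1.1.lt_or_eq with h | h
      · exact h
      · exfalso; have := hu₀Z.2; rw [← h] at this; exact absurd this (not_le.2 hJspos)
    have hlt : ∀ x ∈ Ico s u₀, 0 < J x := by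
      intro x hx
      have hxI : x ∈ Icc s w := ⟨hx.1, hx.2.le.trans hu₀Z.1.2⟩
      by_contra hc
      push_neg at hc
      have : u₀ ≤ x := csInf_le hZbdd ⟨hxI, hc⟩
      linarith [hx.2]
    have hge : ∀ v ∈ Ico s u₀, J s ≤ J v := by
      intro v hv
      have hsv : s ≤ v := hv.1
      have hIsub : Icc s v ⊆ Ico s u₀ := fun x hx => ⟨hx.1, lt_of_le_of_lt hx.2 hv.2⟩
      have hIbig : Icc s v ⊆ Icc (t₁ - γ*lam) (t₁ + γ*lam) := fun x hx =>
        hsw_big ⟨hx.1, hx.2.trans (hv.2.le.trans hu₀Z.1.2)⟩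
      have hk := step_concave J J' J'' s v hsv
        (fun x hx => hdJ x (hIbig hx)) (fun x hx => hdJ' x (hIbig hx))
        (fun x hx => hlt x (hIsub hx)) (fun x hx => hvir x (hIbig hx))
      have hterm : (J' s * (-(1/4)) * (J s) ^ ((-(1/4) : ℝ) - 1)) * (v - s) ≤ 0 := by
        have hP : (0:ℝ) < (J s) ^ ((-(1/4) : ℝ) - 1) := Real.rpow_pos_of_pos hJspos _
        nlinarith [mul_nonneg (mul_nonneg hJ's.le hP.le) (sub_nonneg.2 hsv)]
      have hkle : (J v) ^ (-(1/4) : ℝ) ≤ (J s) ^ (-(1/4) : ℝ) := by linarith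
      by_contra hc
      push_neg at hc
      have := Real.rpow_lt_rpow_of_neg (hlt v hv) hc (by norm_num : (-(1/4) : ℝ) < 0)
      linarith
    have hNB : (𝓝[Ico s u₀] u₀).NeBot := by
      apply mem_closure_iff_nhdsWithin_neBot.mp
      rw [closure_Ico hsu₀.ne]
      exact ⟨hsu₀.le, le_refl _⟩
    have htend : Filter.Tendsto J (𝓝[Ico s u₀] u₀) (𝓝 (J u₀)) :=
      ((hdJ u₀ (hsw_big hu₀Z.1)).continuousAt.continuousWithinAt).tendsto
    have : J s ≤ J u₀ := ge_of_tendsto htend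
      (Filter.eventually_mem_set.mpr self_mem_nhdsWithin |>.mono hge)
    have hJu0 : J u₀ ≤ 0 := hu₀Z.2
    linarith
  -- final contradiction
  have hk := step_concave J J' J'' s w hws.le
    (fun x hx => hdJ x (hsw_big hx)) (fun x hx => hdJ' x (hsw_big hx))
    hpos (fun x hx => hvir x (hsw_big hx))
  have hws' : w - s = 4 * J s / J' s := by rw [hw]; ring
  have hcalc : (J' s * (-(1/4)) * (J s) ^ ((-(1/4) : ℝ) - 1)) * (w - s)
      = -((J s) ^ (-(1/4) : ℝ)) := by
    have h1 : (J s) ^ ((-(1/4) : ℝ) - 1) * J s = (J s) ^ (-(1/4) : ℝ) := by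
      rw [← Real.rpow_add_one hJspos.ne']
      ring_nf
    have hA : J' s ≠ 0 := ne_of_gt hJ's
    have h2 : ∀ x : ℝ, J' s * (-(1/4)) * x * (4 * J s / J' s) = -(x * J s) * (J' s / J' s) :=
      fun x => by ring
    rw [hws', h2, div_self hA, mul_one, h1]
  rw [hcalc] at hk
  have : (0:ℝ) < (J w) ^ (-(1/4) : ℝ) := Real.rpow_pos_of_pos (hpos w ⟨hws.le, le_refl w⟩) _
  linarith


/-- abstract virial ODE lemma.  If `J ≥ 0` is `C²` on
`[t₁* − γλ, t₁* + γλ]` with `J''J ≥ (5/4)(J')²` there, and `J'' ≥ M > 0` on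
`[t₁* − γ₁, t₁* + γ₁]` with `γ₁ ∈ (0, γλ/5]`, then `J ≥ γ₁²M/8` on
`[t₁* − γ₁/2, t₁* + γ₁/2]`. -/
theorem stmt14 (lam γ t₁ M γ₁ : ℝ) (J J' J'' : ℝ → ℝ)
    (hlam : 0 < lam) (hγ : 0 < γ) (hγ' : γ ≤ 1/10)
    (hdJ : ∀ t ∈ Set.Icc (t₁ - γ*lam) (t₁ + γ*lam), HasDerivAt J (J' t) t)
    (hdJ' : ∀ t ∈ Set.Icc (t₁ - γ*lam) (t₁ + γ*lam), HasDerivAt J' (J'' t) t)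
    (hJnn : ∀ t ∈ Set.Icc (t₁ - γ*lam) (t₁ + γ*lam), 0 ≤ J t)
    (hvir : ∀ t ∈ Set.Icc (t₁ - γ*lam) (t₁ + γ*lam), (5/4) * (J' t)^2 ≤ J'' t * J t)
    (hM : 0 < M) (hγ₁ : 0 < γ₁) (hγ₁' : γ₁ ≤ γ*lam/5)
    (hlow : ∀ t ∈ Set.Icc (t₁ - γ₁) (t₁ + γ₁), M ≤ J'' t) :
    ∀ t ∈ Set.Icc (t₁ - γ₁/2) (t₁ + γ₁/2), γ₁^2 * M / 8 ≤ J t := by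
  intro t ht
  rcases le_total t t₁ with h | h
  · exact stmt14_aux lam γ t₁ M γ₁ J J' J'' hlam hγ hγ' hdJ hdJ' hJnn hvir hM hγ₁ hγ₁' hlow
      t ⟨ht.1, h⟩
  · have hmem : ∀ u ∈ Icc (t₁ - γ*lam) (t₁ + γ*lam),
        (2*t₁ - u) ∈ Icc (t₁ - γ*lam) (t₁ + γ*lam) := by
      intro u hu
      exact ⟨by linarith [hu.2], by linarith [hu.1]⟩
    have hmem1 : ∀ u ∈ Icc (t₁ - γ₁) (t₁ + γ₁),
        (2*t₁ - u) ∈ Icc (t₁ - γ₁) (t₁ + γ₁) := by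
      intro u hu
      exact ⟨by linarith [hu.2], by linarith [hu.1]⟩
    have hi : ∀ u : ℝ, HasDerivAt (fun x : ℝ => 2*t₁ - x) (-1) u := by
      intro u
      exact (hasDerivAt_id u).const_sub (2*t₁)
    have key := stmt14_aux lam γ t₁ M γ₁
      (fun u => J (2*t₁ - u)) (fun u => -(J' (2*t₁ - u))) (fun u => J'' (2*t₁ - u))
      hlam hγ hγ'
      (by
        intro u hu
        have := (hdJ (2*t₁ - u) (hmem u hu)).comp u (hi u)
        simp only [mul_neg, mul_one] at this
        exact this)
      (by
        intro u hu
        have := ((hdJ' (2*t₁ - u) (hmem u hu)).comp u (hi u)).neg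
        simp only [mul_neg, mul_one, neg_neg] at this
        exact this)
      (fun u hu => hJnn (2*t₁ - u) (hmem u hu))
      (by
        intro u hu
        have := hvir (2*t₁ - u) (hmem u hu)
        simpa using this)
      hM hγ₁ hγ₁'
      (fun u hu => hlow (2*t₁ - u) (hmem1 u hu))
      (2*t₁ - t) ⟨by linarith [ht.2], by linarith⟩
    simpa using key
end

section
/- Let G ∈ L²(ℝ), δ > 0, ℓ > 1, and suppose ‖G‖_{L²(−ℓt, −ℓ^{−1}t)} ≥ δ for all t in an interval [b, a] with ℓ R ≤ b < a. Then δ² ⌊log_{ℓ²}(a/b)⌋ ≤ ∫_{−a}^{−b} |G(s)|² ds. In particular, if ∫_{−a}^{−b}|G(s)|² ds ≤ C, then a/b ≤ ℓ^{2(C/δ² + 1)}. -/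
open Set MeasureTheory

/-- pigeonhole bound for the length of a collision period.  If
`G ∈ L²(ℝ)` satisfies `‖G‖²_{L²(−ℓt, −ℓ⁻¹t)} ≥ δ²` for all `t ∈ [b,a]` with
`ℓR ≤ b < a`, then any `N` indices `j` with `bℓ^{2j+1} ≤ a/ℓ` give
`N δ² ≤ ∫_{−a}^{−b} |G(s)|² ds` (the intervals `(−ℓt_j, −ℓ⁻¹t_j)`, `t_j = bℓ^{2j+1}`,
being disjoint and contained in `(−a,−b)`); in particular if that integral is at most
`C` then `a/b ≤ ℓ^{2(C/δ²+1)}`. -/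
theorem stmt19 (G : ℝ → ℝ) (hG : MemLp G 2 volume)
    (δ ℓ R b a : ℝ) (hδ : 0 < δ) (hℓ : 1 < ℓ) (hR : 0 < R)
    (hb : ℓ * R ≤ b) (hba : b < a)
    (hlow : ∀ t ∈ Set.Icc b a, δ^2 ≤ ∫ s in Set.Ioo (-(ℓ*t)) (-(t/ℓ)), (G s)^2) :
    (∀ N : ℕ, (∀ j < N, b * ℓ^(2*j+1) ≤ a/ℓ) →
      (N:ℝ) * δ^2 ≤ ∫ s in Set.Ioc (-a) (-b), (G s)^2) ∧
    ∀ C : ℝ, (∫ s in Set.Ioc (-a) (-b), (G s)^2) ≤ C →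
      a/b ≤ ℓ ^ (2*(C/δ^2 + 1)) := by
  have hℓ0 : (0:ℝ) < ℓ := lt_trans one_pos hℓ
  have hb0 : 0 < b := lt_of_lt_of_le (mul_pos hℓ0 hR) hb
  have ha0 : 0 < a := hb0.trans hba
  have hint : Integrable (fun s => (G s)^2) volume := hG.integrable_sq
  have main : ∀ N : ℕ, (∀ j < N, b * ℓ^(2*j+1) ≤ a/ℓ) →
      (N:ℝ) * δ^2 ≤ ∫ s in Set.Ioc (-a) (-b), (G s)^2 := by
    intro N hN
    set I : ℕ → Set ℝ := fun j => Set.Ioo (-(b*ℓ^(2*j+2))) (-(b*ℓ^(2*j))) with hI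
    have hsub : ∀ j < N, I j ⊆ Set.Ioc (-a) (-b) := by
      intro j hj x hx
      have h2 : b * ℓ^(2*j+1) * ℓ ≤ a := by
        rw [← le_div_iff₀ hℓ0]; exact hN j hj
      have h1 : b * ℓ^(2*j+2) ≤ a := by
        calc b * ℓ^(2*j+2) = b * ℓ^(2*j+1) * ℓ := by ring
        _ ≤ a := h2
      have h3 : b ≤ b * ℓ^(2*j) := le_mul_of_one_le_right hb0.le (one_le_pow₀ hℓ.le)
      exact ⟨lt_of_le_of_lt (by linarith) hx.1, le_of_lt (lt_of_lt_of_le hx.2 (by linarith))⟩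
    have hkey : ∀ j < N, δ^2 ≤ ∫ s in I j, (G s)^2 := by
      intro j hj
      have ht1 : b ≤ b * ℓ^(2*j+1) := le_mul_of_one_le_right hb0.le (one_le_pow₀ hℓ.le)
      have ht2 : b * ℓ^(2*j+1) ≤ a := le_trans (hN j hj) (div_le_self ha0.le hℓ.le)
      have h := hlow (b * ℓ^(2*j+1)) ⟨ht1, ht2⟩
      have e1 : ℓ * (b * ℓ^(2*j+1)) = b * ℓ^(2*j+2) := by ring
      have e2 : b * ℓ^(2*j+1) / ℓ = b * ℓ^(2*j) := by
        field_simp; ring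
      rwa [e1, e2] at h
    have hd : ∀ i j : ℕ, i < j → Disjoint (I i) (I j) := by
      intro i j h
      apply Set.disjoint_left.mpr
      intro x hxi hxj
      have h1 : x < -(b*ℓ^(2*j)) := hxj.2
      have h2 : -(b*ℓ^(2*i+2)) < x := hxi.1
      have h3 : b*ℓ^(2*i+2) ≤ b*ℓ^(2*j) :=
        mul_le_mul_of_nonneg_left (pow_le_pow_right₀ hℓ.le (by omega)) hb0.le
      linarith
    have hdisj : (↑(Finset.range N) : Set ℕ).Pairwise (Function.onFun Disjoint I) :=
      fun i _ j _ hij => hij.lt_or_gt.elim (hd i j) (fun h => (hd j i h).symm)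
    have hIeq : ∫ x in ⋃ j ∈ Finset.range N, I j, (G x)^2
        = ∑ j ∈ Finset.range N, ∫ x in I j, (G x)^2 :=
      integral_biUnion_finset _ (fun j _ => measurableSet_Ioo) hdisj
        (fun j _ => hint.integrableOn)
    calc (N:ℝ) * δ^2 = ∑ _j ∈ Finset.range N, δ^2 := by
          simp [Finset.sum_const, mul_comm]
      _ ≤ ∑ j ∈ Finset.range N, ∫ x in I j, (G x)^2 :=
          Finset.sum_le_sum (fun j hj => hkey j (Finset.mem_range.mp hj))
      _ = ∫ x in ⋃ j ∈ Finset.range N, I j, (G x)^2 := hIeq.symm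
      _ ≤ ∫ x in Set.Ioc (-a) (-b), (G x)^2 := by
          apply setIntegral_mono_set hint.integrableOn
          · exact Filter.Eventually.of_forall (fun x => sq_nonneg _)
          · exact HasSubset.Subset.eventuallyLE
              (Set.iUnion₂_subset fun j hj => hsub j (Finset.mem_range.mp hj))
  refine ⟨main, ?_⟩
  intro C hC
  have hint0 : 0 ≤ ∫ s in Set.Ioc (-a) (-b), (G s)^2 :=
    setIntegral_nonneg measurableSet_Ioc (fun x _ => sq_nonneg _)
  have hC0 : 0 ≤ C := le_trans hint0 hC
  have hδ2 : (0:ℝ) < δ^2 := by positivity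
  set x := C/δ^2 with hxdef
  have hx0 : 0 ≤ x := div_nonneg hC0 hδ2.le
  by_contra hcon
  push_neg at hcon
  set N := ⌊x⌋₊ + 1 with hNdef
  have hNx : x < N := by exact_mod_cast Nat.lt_floor_add_one x
  have hN : ∀ j < N, b * ℓ^(2*j+1) ≤ a/ℓ := by
    intro j hj
    have hjx : (j:ℝ) ≤ x := by
      have : j ≤ ⌊x⌋₊ := by omega
      calc (j:ℝ) ≤ (⌊x⌋₊:ℝ) := by exact_mod_cast this
        _ ≤ x := Nat.floor_le hx0
    have hpow : (ℓ:ℝ)^(2*j+2) ≤ ℓ ^ (2*(x+1) : ℝ) := by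
      rw [← Real.rpow_natCast ℓ (2*j+2)]
      apply Real.rpow_le_rpow_of_exponent_le hℓ.le
      push_cast
      linarith
    have h1 : b * ℓ^(2*j+2) ≤ a := by
      have h2 : (ℓ:ℝ)^(2*j+2) ≤ a/b := le_of_lt (lt_of_le_of_lt hpow hcon)
      calc b * ℓ^(2*j+2) ≤ b * (a/b) := mul_le_mul_of_nonneg_left h2 hb0.le
        _ = a := by field_simp
    rw [le_div_iff₀ hℓ0]
    calc b * ℓ^(2*j+1) * ℓ = b * ℓ^(2*j+2) := by ring
      _ ≤ a := h1
  have hfin : (N:ℝ) * δ^2 ≤ C := le_trans (main N hN) hC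
  have : (N:ℝ) ≤ x := by
    rw [hxdef, le_div_iff₀ hδ2]
    exact hfin
  linarith
end
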